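/- Let S be a set-string of length m over a finite alphabet Σ. For every position i and every finite set O of natural numbers, the multiplicity of O in the multiset offset representation Ŝ[i] equals the sum, over all δ ∈ O with δ ≤ i, of N_S(i − δ, O); in particular Count_S(i, O) = N_S(i, O) + Σ_{δ ∈ O, 0 < δ ≤ i} N_S(i − δ, O). -/

import Mathlib

/-- The occurrence set of character `σ` in the set-string `S`. -/
def Occ {Γ : Type*} [DecidableEq Γ] {m : ℕ} (S : Fin m → Finset Γ) (σ : Γ) :
    Finset (Fin m) :=
  Finset.univ.filter fun i => σ ∈ S i

/-- The offset set of character `σ` in the set-string `S`: the set of distances from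
its first occurrence to each of its occurrences; `∅` if `σ` never occurs. -/
def OffSet {Γ : Type*} [DecidableEq Γ] {m : ℕ} (S : Fin m → Finset Γ) (σ : Γ) :
    Finset ℕ :=
  if h : (Occ S σ).Nonempty then
    (Occ S σ).image fun i : Fin m => (i : ℕ) - (((Occ S σ).min' h : Fin m) : ℕ)
  else ∅

/-- The multiset offset representation of `S` at position `i`: the multiset of the
offset sets of the characters in `S i` (one element per character). -/
def offsetRep {Γ : Type*} [DecidableEq Γ] {m : ℕ} (S : Fin m → Finset Γ) (i : Fin m) :
    Multiset (Finset ℕ) :=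
  (S i).val.map fun σ => OffSet S σ

/-- `NStart S s O` is the number of characters whose first occurrence in `S` is at
position `s` and whose offset set is `O`. -/
def NStart {Γ : Type*} [Fintype Γ] [DecidableEq Γ] {m : ℕ} (S : Fin m → Finset Γ)
    (s : ℕ) (O : Finset ℕ) : ℕ :=
  if h : s < m then
    (Finset.univ.filter fun σ =>
      σ ∈ S ⟨s, h⟩ ∧ (∀ j, σ ∈ S j → s ≤ (j : ℕ)) ∧ OffSet S σ = O).card
  else 0

section Aux
variable {Γ : Type*} [DecidableEq Γ] {m : ℕ} (S : Fin m → Finset Γ)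

lemma mem_Occ {σ : Γ} {j : Fin m} : j ∈ Occ S σ ↔ σ ∈ S j := by
  simp [Occ]

noncomputable def fstOcc (σ : Γ) : ℕ :=
  if h : (Occ S σ).Nonempty then (((Occ S σ).min' h : Fin m) : ℕ) else 0

lemma fstOcc_mem {σ : Γ} (h : (Occ S σ).Nonempty) :
    σ ∈ S ((Occ S σ).min' h) := by
  have := (Occ S σ).min'_mem h
  rwa [mem_Occ] at this

lemma fstOcc_le {σ : Γ} (h : (Occ S σ).Nonempty) {j : Fin m} (hj : σ ∈ S j) :
    (((Occ S σ).min' h : Fin m) : ℕ) ≤ (j : ℕ) := by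
  exact (Occ S σ).min'_le j ((mem_Occ S).2 hj)

lemma mem_OffSet {σ : Γ} (h : (Occ S σ).Nonempty) {δ : ℕ} :
    δ ∈ OffSet S σ ↔ ∃ j : Fin m, σ ∈ S j ∧ (j : ℕ) - (((Occ S σ).min' h : Fin m) : ℕ) = δ := by
  simp [OffSet, dif_pos h, mem_Occ]

end Aux

/-- The multiplicity of `O` in the multiset offset representation at position `i`
equals the sum, over all `δ ∈ O` with `δ ≤ i`, of `NStart S (i - δ) O`; in particular
it equals `NStart S i O` plus the sum over the strictly positive such offsets. -/
theorem count_offsetRep_eq_sum_NStart {Γ : Type*} [Fintype Γ] [DecidableEq Γ]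
    {m : ℕ} (S : Fin m → Finset Γ) (i : Fin m) (O : Finset ℕ) :
    (offsetRep S i).count O =
        ∑ δ ∈ O.filter (fun δ => δ ≤ (i : ℕ)), NStart S ((i : ℕ) - δ) O ∧
      (offsetRep S i).count O =
        NStart S (i : ℕ) O +
          ∑ δ ∈ O.filter (fun δ => 0 < δ ∧ δ ≤ (i : ℕ)), NStart S ((i : ℕ) - δ) O := by
  classical
  have hcount : (offsetRep S i).count O = ((S i).filter fun σ => OffSet S σ = O).card := by
    rw [offsetRep, Multiset.count_map,
      Multiset.filter_congr (q := fun σ => OffSet S σ = O) (fun a _ => eq_comm)]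
    rfl
  have hmain : (offsetRep S i).count O =
      ∑ δ ∈ O.filter (fun δ => δ ≤ (i : ℕ)), NStart S ((i : ℕ) - δ) O := by
    rw [hcount]
    rw [Finset.card_eq_sum_card_fiberwise
      (f := fun σ => (i : ℕ) - fstOcc S σ) (t := O.filter (fun δ => δ ≤ (i : ℕ)))]
    · refine Finset.sum_congr rfl fun δ hδ => ?_
      rw [Finset.mem_filter] at hδ
      obtain ⟨hδO, hδi⟩ := hδ
      have hlt : (i : ℕ) - δ < m := lt_of_le_of_lt (Nat.sub_le _ _) i.isLt
      rw [NStart, dif_pos hlt]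
      congr 1
      ext σ
      simp only [Finset.mem_filter, Finset.mem_univ, true_and]
      constructor
      · rintro ⟨⟨hSi, hOσ⟩, hfib⟩
        have hne : (Occ S σ).Nonempty := ⟨i, (mem_Occ S).2 hSi⟩
        have hsle : (((Occ S σ).min' hne : Fin m) : ℕ) ≤ (i : ℕ) := fstOcc_le S hne hSi
        have hfib' : (i : ℕ) - (((Occ S σ).min' hne : Fin m) : ℕ) = δ := by
          rw [fstOcc, dif_pos hne] at hfib; exact hfib
        have hseq : (((Occ S σ).min' hne : Fin m) : ℕ) = (i : ℕ) - δ := by omega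
        refine ⟨?_, ?_, hOσ⟩
        · have : (⟨(i : ℕ) - δ, hlt⟩ : Fin m) = (Occ S σ).min' hne := by
            apply Fin.ext; simp [← hseq]
          rw [this]; exact fstOcc_mem S hne
        · intro j hj
          have := fstOcc_le S hne hj
          omega
      · rintro ⟨hmem, hmin, hOσ⟩
        have hne : (Occ S σ).Nonempty := ⟨⟨(i : ℕ) - δ, hlt⟩, (mem_Occ S).2 hmem⟩
        have h1 : (((Occ S σ).min' hne : Fin m) : ℕ) ≤ (i : ℕ) - δ := fstOcc_le S hne hmem
        have h2 : (i : ℕ) - δ ≤ (((Occ S σ).min' hne : Fin m) : ℕ) :=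
          hmin _ (fstOcc_mem S hne)
        have hseq : (((Occ S σ).min' hne : Fin m) : ℕ) = (i : ℕ) - δ := le_antisymm h1 h2
        have hδO' : δ ∈ OffSet S σ := hOσ ▸ hδO
        obtain ⟨j, hjS, hjδ⟩ := (mem_OffSet S hne).1 hδO'
        have hjge : (((Occ S σ).min' hne : Fin m) : ℕ) ≤ (j : ℕ) := fstOcc_le S hne hjS
        have hji : (j : ℕ) = (i : ℕ) := by omega
        have hjeq : j = i := Fin.ext hji
        refine ⟨⟨hjeq ▸ hjS, hOσ⟩, ?_⟩
        rw [fstOcc, dif_pos hne]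
        omega
    · intro σ hσ
      rw [Finset.mem_coe, Finset.mem_filter] at hσ
      obtain ⟨hSi, hOσ⟩ := hσ
      have hne : (Occ S σ).Nonempty := ⟨i, (mem_Occ S).2 hSi⟩
      have hδ : (i : ℕ) - (((Occ S σ).min' hne : Fin m) : ℕ) ∈ O := by
        rw [← hOσ, mem_OffSet S hne]
        exact ⟨i, hSi, rfl⟩
      simp only [Finset.mem_coe]
      rw [fstOcc, dif_pos hne]
      exact Finset.mem_filter.2 ⟨hδ, Nat.sub_le _ _⟩
  refine ⟨hmain, ?_⟩
  rw [hmain]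
  have hsplit : O.filter (fun δ => δ ≤ (i : ℕ)) =
      (O.filter (fun δ => δ = 0)) ∪ O.filter (fun δ => 0 < δ ∧ δ ≤ (i : ℕ)) := by
    ext δ
    simp only [Finset.mem_union, Finset.mem_filter]
    by_cases h : δ ∈ O <;> simp [h]; omega
  rw [hsplit, Finset.sum_union]
  · congr 1
    by_cases h0 : 0 ∈ O
    · rw [show O.filter (fun δ => δ = 0) = {0} by
        ext δ
        simp only [Finset.mem_filter, Finset.mem_singleton]
        exact ⟨fun h => h.2, fun h => ⟨h ▸ h0, h⟩⟩]
      simp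
    · rw [show O.filter (fun δ => δ = 0) = (∅ : Finset ℕ) by
        ext δ
        simp only [Finset.mem_filter, Finset.notMem_empty, iff_false, not_and]
        rintro hδ rfl; exact h0 hδ]
      simp only [Finset.sum_empty]
      symm
      rw [NStart, dif_pos i.isLt]
      rw [Finset.card_eq_zero, Finset.filter_eq_empty_iff]
      rintro σ - ⟨hmem, hmin, hOσ⟩
      apply h0
      rw [← hOσ]
      have hne : (Occ S σ).Nonempty := ⟨⟨(i : ℕ), i.isLt⟩, (mem_Occ S).2 hmem⟩
      rw [mem_OffSet S hne]
      exact ⟨(Occ S σ).min' hne, fstOcc_mem S hne, Nat.sub_self _⟩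
  · rw [Finset.disjoint_filter]
    intro δ _ h
    omega
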